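/- Let $f: X \to \mathbb{R}_{>0}$ be a function on a space $X$ with a self-map $\phi$, and suppose there are constants $C_1 > 1$, $0 < C_0 < 1$, and a locally constant function $z \mapsto n_z \in \{1, \dots, n_{\max}\}$ such that for every $z \in X$: $\prod_{i=0}^{n_z - 1} f(\phi^i(z)) > C_1$ and $f(z) > C_0$ pointwise. Then for every $\lambda \geq 1$ there exists $N \geq 1$ such that for all $z \in X$ and all $n \geq N$: $\prod_{i=0}^{n-1} f(\phi^i(z)) > \lambda$. -/
import Mathlib


/-- Uniform expansion from variable-block expansion: if along every
orbit there are blocks of bounded length `n_z ≤ n_max` over which the product of `f`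
exceeds `C₁ > 1`, and `f > C₀` pointwise with `0 < C₀ < 1`, then for every `λ ≥ 1`
there is `N` such that all orbit products of length `n ≥ N` exceed `λ`. -/
theorem stmt12 {X : Type*} (φ : X → X) (f : X → ℝ) (nz : X → ℕ) (nmax : ℕ)
    (C0 C1 : ℝ) (hC1 : 1 < C1) (hC0 : 0 < C0) (hC0' : C0 < 1)
    (hn : ∀ z, 1 ≤ nz z ∧ nz z ≤ nmax)
    (hblock : ∀ z, C1 < ∏ i ∈ Finset.range (nz z), f (φ^[i] z))
    (hf : ∀ z, C0 < f z) :
    ∀ lam : ℝ, 1 ≤ lam → ∃ N : ℕ, 1 ≤ N ∧ ∀ z : X, ∀ n : ℕ, N ≤ n →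
      lam < ∏ i ∈ Finset.range n, f (φ^[i] z) := by
  intro lam hlam
  by_cases hX : Nonempty X
  swap
  · exact ⟨1, le_refl 1, fun z => absurd ⟨z⟩ hX⟩
  obtain ⟨z0⟩ := hX
  have hnmax : 1 ≤ nmax := le_trans (hn z0).1 (hn z0).2
  have hC1pos : (0 : ℝ) < C1 := lt_trans one_pos hC1
  have hC0n : (0 : ℝ) < C0 ^ nmax := pow_pos hC0 _
  -- key inductive estimate
  have key : ∀ n : ℕ, ∀ z : X,
      C1 ^ (n / nmax) * C0 ^ nmax < ∏ i ∈ Finset.range n, f (φ^[i] z) := by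
    intro n
    induction n using Nat.strong_induction_on with
    | _ n ih =>
      intro z
      by_cases h : n < nmax
      · have hdiv : n / nmax = 0 := Nat.div_eq_of_lt h
        rw [hdiv, pow_zero, one_mul]
        have h1 : C0 ^ nmax < C0 ^ n := by
          apply pow_lt_pow_right_of_lt_one₀ hC0 hC0' h
        have h2 : C0 ^ n ≤ ∏ i ∈ Finset.range n, f (φ^[i] z) := by
          have := Finset.prod_le_prod (s := Finset.range n)
            (f := fun _ => C0) (g := fun i => f (φ^[i] z))
            (fun i _ => le_of_lt hC0) (fun i _ => le_of_lt (hf _))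
          rwa [Finset.prod_const, Finset.card_range] at this
        exact lt_of_lt_of_le h1 h2
      · push_neg at h
        set m := nz z with hm
        have hm1 : 1 ≤ m := (hn z).1
        have hm2 : m ≤ nmax := (hn z).2
        have hmn : m ≤ n := le_trans hm2 h
        have hsplit : ∏ i ∈ Finset.range n, f (φ^[i] z)
            = (∏ i ∈ Finset.range m, f (φ^[i] z)) *
              ∏ i ∈ Finset.range (n - m), f (φ^[i] (φ^[m] z)) := by
          conv_lhs => rw [show n = m + (n - m) by omega]
          rw [Finset.prod_range_add]
          congr 1
          refine Finset.prod_congr rfl fun i _ => ?_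
          rw [Nat.add_comm m i, Function.iterate_add_apply]
        rw [hsplit]
        have hrec := ih (n - m) (by omega) (φ^[m] z)
        have hb := hblock z
        have hmul : C1 * (C1 ^ ((n - m) / nmax) * C0 ^ nmax)
            < (∏ i ∈ Finset.range m, f (φ^[i] z)) *
              ∏ i ∈ Finset.range (n - m), f (φ^[i] (φ^[m] z)) :=
          mul_lt_mul'' hb hrec (le_of_lt hC1pos)
            (le_of_lt (mul_pos (pow_pos hC1pos _) hC0n))
        refine lt_of_le_of_lt ?_ hmul
        rw [← mul_assoc, ← pow_succ']
        apply mul_le_mul_of_nonneg_right _ (le_of_lt hC0n)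
        apply pow_le_pow_right₀ (le_of_lt hC1)
        have : n / nmax ≤ ((n - m) + nmax) / nmax :=
          Nat.div_le_div_right (by omega)
        rw [Nat.add_div_right _ (by omega)] at this
        omega
  -- choose k with C1 ^ k large enough
  obtain ⟨k, hk⟩ := pow_unbounded_of_one_lt (lam / C0 ^ nmax) hC1
  refine ⟨(k + 1) * nmax, Nat.mul_pos (Nat.succ_pos k) hnmax, fun z n hnN => ?_⟩
  have hkdiv : k ≤ n / nmax := by
    have : k + 1 ≤ n / nmax := (Nat.le_div_iff_mul_le (by omega)).2 hnN
    omega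
  have h1 : lam < C1 ^ k * C0 ^ nmax := by
    rw [div_lt_iff₀ hC0n] at hk
    linarith
  refine lt_trans (lt_of_lt_of_le h1 ?_) (key n z)
  exact mul_le_mul_of_nonneg_right
    (pow_le_pow_right₀ (le_of_lt hC1) hkdiv) (le_of_lt hC0n)
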